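/- Let values of n bidders be i.i.d. from a continuous distribution F on [0, H], and suppose s : [0,H] → ℝ is a non-decreasing function with 0 ≤ s(v) ≤ v for all v that is a symmetric Bayes–Nash equilibrium bidding strategy of the pay-as-bid greedy auction (PABGA) with block size B. Then the shading auction — the direct mechanism that allocates the B highest reported values and charges each allocated bidder i the payment s(v_i), with no burning — is BIC, MMIC, OCA-proof, and efficient (it always allocates a set of B bidders with the highest values). -/

import Mathlib

open MeasureTheory

/-- The rank of bid `i` in the bid vector `b`: the number of bids that beat it
(higher bid, or equal bid with smaller index, as deterministic tie-breaking). -/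
noncomputable def rank {n : ℕ} (b : Fin n → ℝ) (i : Fin n) : ℕ :=
  (Finset.univ.filter fun j => b i < b j ∨ (b j = b i ∧ j < i)).card

/-- The greedy allocation of the `B` highest bids. -/
noncomputable def topAlloc (B : ℕ) {n : ℕ} (b : Fin n → ℝ) (i : Fin n) : Bool :=
  decide (rank b i < B)

/-- Utility of bidder `i` with value `t` in the pay-as-bid greedy auction with block
size `B`, under bids `b`: an allocated bidder pays its own bid. -/
noncomputable def pabgaUtil (B : ℕ) {n : ℕ} (b : Fin n → ℝ) (i : Fin n) (t : ℝ) : ℝ :=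
  if topAlloc B b i then t - b i else 0

/-- Utility of bidder `i` with value `t` in the shading auction with strategy `s`, under
reports `b`: the `B` highest reports are allocated and an allocated bidder `i` pays
`s (b i)`, with no burning. -/
noncomputable def shadeUtil (s : ℝ → ℝ) (B : ℕ) {n : ℕ} (b : Fin n → ℝ) (i : Fin n)
    (t : ℝ) : ℝ :=
  if topAlloc B b i then t - s (b i) else 0

/-- The product measure of `n` i.i.d. draws from `μ`. -/
noncomputable def iidPi (μ : Measure ℝ) (n : ℕ) : Measure (Fin n → ℝ) :=
  Measure.pi fun _ : Fin n => μ

/-- j beats i -/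
def beats {n : ℕ} (b : Fin n → ℝ) (j i : Fin n) : Prop :=
  b i < b j ∨ (b j = b i ∧ j < i)

noncomputable instance {n : ℕ} (b : Fin n → ℝ) (j i : Fin n) : Decidable (beats b j i) := by
  unfold beats; infer_instance

lemma rank_eq {n : ℕ} (b : Fin n → ℝ) (i : Fin n) :
    rank b i = (Finset.univ.filter fun j => beats b j i).card := by
  unfold rank beats
  exact congrArg Finset.card (Finset.filter_congr_decidable _ _ _)

lemma not_beats_self {n : ℕ} (b : Fin n → ℝ) (i : Fin n) : ¬ beats b i i := by
  rintro (h | ⟨_, h⟩) <;> exact lt_irrefl _ h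

lemma beats_trans {n : ℕ} (b : Fin n → ℝ) {k j i : Fin n}
    (h1 : beats b k j) (h2 : beats b j i) : beats b k i := by
  rcases h1 with h1 | ⟨h1, h1'⟩ <;> rcases h2 with h2 | ⟨h2, h2'⟩
  · exact Or.inl (h2.trans h1)
  · exact Or.inl (h2 ▸ h1)
  · exact Or.inl (h1 ▸ h2)
  · exact Or.inr ⟨h1.trans h2, h1'.trans h2'⟩

lemma beats_total {n : ℕ} (b : Fin n → ℝ) {i j : Fin n} (h : i ≠ j) :
    beats b i j ∨ beats b j i := by
  rcases lt_trichotomy (b i) (b j) with hb | hb | hb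
  · exact Or.inr (Or.inl hb)
  · rcases lt_or_gt_of_ne h with hij | hij
    · exact Or.inl (Or.inr ⟨hb, hij⟩)
    · exact Or.inr (Or.inr ⟨hb.symm, hij⟩)
  · exact Or.inl (Or.inl hb)

lemma rank_lt_of_beats {n : ℕ} (b : Fin n → ℝ) {j i : Fin n} (h : beats b j i) :
    rank b j < rank b i := by
  have hsub : insert j (Finset.univ.filter fun k => beats b k j) ⊆
      Finset.univ.filter fun k => beats b k i := by
    intro k hk
    rcases Finset.mem_insert.mp hk with rfl | hk
    · exact Finset.mem_filter.mpr ⟨Finset.mem_univ _, h⟩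
    · exact Finset.mem_filter.mpr ⟨Finset.mem_univ _,
        beats_trans b (Finset.mem_filter.mp hk).2 h⟩
  have hj : j ∉ Finset.univ.filter fun k => beats b k j := by
    simp [not_beats_self]
  calc rank b j < rank b j + 1 := Nat.lt_succ_self _
    _ = (insert j (Finset.univ.filter fun k => beats b k j)).card := by
        rw [Finset.card_insert_of_notMem hj, rank_eq]
    _ ≤ (Finset.univ.filter fun k => beats b k i).card := Finset.card_le_card hsub
    _ = rank b i := (rank_eq b i).symm

lemma rank_lt_n {n : ℕ} (b : Fin n → ℝ) (i : Fin n) : rank b i < n := by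
  have h : (Finset.univ.filter fun j => beats b j i) ⊂ Finset.univ := by
    rw [Finset.ssubset_iff_of_subset (Finset.filter_subset _ _)]
    exact ⟨i, Finset.mem_univ _, by simp [not_beats_self]⟩
  have := Finset.card_lt_card h
  rw [← rank_eq] at this
  simpa using this

lemma rank_injective {n : ℕ} (b : Fin n → ℝ) : Function.Injective (rank b) := by
  intro i j hij
  by_contra h
  rcases beats_total b h with hb | hb
  · exact absurd hij (Nat.ne_of_gt (rank_lt_of_beats b hb)).symm
  · exact absurd hij (Nat.ne_of_gt (rank_lt_of_beats b hb))

lemma card_topAlloc {n B : ℕ} (hBn : B ≤ n) (b : Fin n → ℝ) :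
    (Finset.univ.filter fun i : Fin n => topAlloc B b i = true).card = B := by
  have hinj : Function.Injective (fun i : Fin n => (⟨rank b i, rank_lt_n b i⟩ : Fin n)) := by
    intro i j h
    exact rank_injective b (congrArg Fin.val h)
  have hbij := (Finite.injective_iff_bijective).mp hinj
  have h1 : (Finset.univ.filter fun i : Fin n => topAlloc B b i = true).card
      = (Finset.univ.filter fun m : Fin n => (m : ℕ) < B).card := by
    refine Finset.card_bij (fun i _ => (⟨rank b i, rank_lt_n b i⟩ : Fin n)) ?_ ?_ ?_
    · intro i hi
      simp only [Finset.mem_filter, Finset.mem_univ, true_and, topAlloc,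
        decide_eq_true_eq] at hi ⊢
      exact hi
    · intro i _ j _ h
      exact hinj h
    · intro m hm
      obtain ⟨i, hi⟩ := hbij.2 m
      refine ⟨i, ?_, hi⟩
      simp only [Finset.mem_filter, Finset.mem_univ, true_and, topAlloc,
        decide_eq_true_eq] at hm ⊢
      rw [← hi] at hm
      exact hm
  have h2 : (Finset.univ.filter fun m : Fin n => (m : ℕ) < B).card
      = ((Finset.range n).filter fun m => m < B).card := by
    refine Finset.card_bij (fun m _ => (m : ℕ)) ?_ ?_ ?_
    · intro m hm
      simp only [Finset.mem_filter, Finset.mem_univ, true_and, Finset.mem_range] at hm ⊢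
      exact ⟨m.isLt, hm⟩
    · intro i _ j _ h; exact Fin.val_injective h
    · intro m hm
      simp only [Finset.mem_filter, Finset.mem_range] at hm
      exact ⟨⟨m, hm.1⟩, by simp [hm.2], rfl⟩
  have h3 : (Finset.range n).filter (fun m => m < B) = Finset.range B := by
    ext m; simp only [Finset.mem_filter, Finset.mem_range]; omega
  rw [h1, h2, h3, Finset.card_range]

lemma topAlloc_le {n B : ℕ} (b : Fin n → ℝ) {i j : Fin n}
    (hi : topAlloc B b i = true) (hj : topAlloc B b j = false) : b j ≤ b i := by
  simp only [topAlloc, decide_eq_true_eq, decide_eq_false_iff_not, not_lt] at hi hj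
  by_contra h
  push_neg at h
  have := rank_lt_of_beats b (Or.inl h : beats b j i)
  omega

lemma sum_le_winners {n : ℕ} (g : Fin n → ℝ) (hg : ∀ i, 0 ≤ g i)
    (W T : Finset (Fin n)) (hcard : T.card ≤ W.card)
    (hW : ∀ i ∈ W, ∀ j ∉ W, g j ≤ g i) :
    ∑ i ∈ T, g i ≤ ∑ i ∈ W, g i := by
  have hT : ∑ i ∈ T, g i = ∑ i ∈ T ∩ W, g i + ∑ i ∈ T \ W, g i := by
    rw [Finset.sum_inter_add_sum_sdiff]
  have hWs : ∑ i ∈ W, g i = ∑ i ∈ T ∩ W, g i + ∑ i ∈ W \ T, g i := by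
    rw [Finset.inter_comm, Finset.sum_inter_add_sum_sdiff]
  rw [hT, hWs]
  have hcd : (T \ W).card ≤ (W \ T).card := by
    have h1 := Finset.card_inter_add_card_sdiff T W
    have h2 := Finset.card_inter_add_card_sdiff W T
    rw [Finset.inter_comm W T] at h2
    omega
  have hdiff : ∑ i ∈ T \ W, g i ≤ ∑ i ∈ W \ T, g i := by
    rcases Finset.eq_empty_or_nonempty (T \ W) with he | hne
    · rw [he, Finset.sum_empty]
      exact Finset.sum_nonneg fun i _ => hg i
    · have hWT : (W \ T).Nonempty := by
        rw [← Finset.card_pos] at hne ⊢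
        omega
      obtain ⟨i0, hi0, hmin⟩ := Finset.exists_min_image (W \ T) g hWT
      have hi0W : i0 ∈ W := (Finset.mem_sdiff.mp hi0).1
      calc ∑ i ∈ T \ W, g i ≤ (T \ W).card • g i0 := by
            apply Finset.sum_le_card_nsmul
            intro j hj
            exact hW i0 hi0W j (Finset.mem_sdiff.mp hj).2
        _ ≤ (W \ T).card • g i0 := by
            have : (0:ℝ) ≤ g i0 := hg i0
            exact nsmul_le_nsmul_left this hcd
        _ ≤ ∑ i ∈ W \ T, g i := Finset.card_nsmul_le_sum _ _ _ hmin
  linarith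

lemma sum_alloc_le {n B : ℕ} (hBn : B ≤ n) (H : ℝ)
    (g : Fin n → ℝ) (hg : ∀ i, 0 ≤ g i)
    (hgmono : ∀ i j : Fin n, topAlloc B g i = true → topAlloc B g j = false → g j ≤ g i)
    (T : Finset (Fin n)) (hT : T.card ≤ B) :
    ∑ i ∈ T, g i ≤ ∑ i ∈ Finset.univ.filter (fun i => topAlloc B g i = true), g i := by
  apply sum_le_winners g hg _ T
  · rw [card_topAlloc hBn]; exact hT
  · intro i hi j hj
    simp only [Finset.mem_filter, Finset.mem_univ, true_and] at hi hj
    exact hgmono i j hi (by simpa using hj)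

-- the monotone shaded values satisfy the winner-dominance property for reports r
lemma shade_winner_prop {n B : ℕ} (H : ℝ) (s : ℝ → ℝ)
    (hs_mono : MonotoneOn s (Set.Icc (0:ℝ) H))
    (r : Fin n → ℝ) (hr : ∀ i, r i ∈ Set.Icc (0:ℝ) H)
    {i j : Fin n} (hi : topAlloc B r i = true) (hj : topAlloc B r j = false) :
    s (r j) ≤ s (r i) :=
  hs_mono (hr j) (hr i) (topAlloc_le r hi hj)

lemma mmic_core {n B : ℕ} (hBn : B ≤ n) (H : ℝ) (s : ℝ → ℝ)
    (hs_mono : MonotoneOn s (Set.Icc (0:ℝ) H))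
    (hs_bounds : ∀ v ∈ Set.Icc (0 : ℝ) H, 0 ≤ s v ∧ s v ≤ v)
    (r : Fin n → ℝ) (hr : ∀ i, r i ∈ Set.Icc (0:ℝ) H)
    (m : ℕ) (f : Fin m → ℝ) (hf : ∀ j, f j ∈ Set.Icc (0:ℝ) H)
    (α : Fin (n + m) → Bool)
    (hα : (Finset.univ.filter fun i => α i = true).card ≤ B) :
    ((∑ i : Fin (n + m), if α i then s (Fin.append r f i) else 0)
          - ∑ j : Fin m, (if α (Fin.natAdd n j) then s (f j) else 0))
        ≤ ∑ i : Fin n, (if topAlloc B r i then s (r i) else 0) := by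
  have hsplit : (∑ i : Fin (n + m), if α i then s (Fin.append r f i) else 0)
      = (∑ i : Fin n, if α (Fin.castAdd m i) then s (r i) else 0)
        + ∑ j : Fin m, (if α (Fin.natAdd n j) then s (f j) else 0) := by
    rw [Fin.sum_univ_add]
    congr 1
    · apply Finset.sum_congr rfl; intro i _; rw [Fin.append_left]
    · apply Finset.sum_congr rfl; intro j _; rw [Fin.append_right]
  rw [hsplit]
  ring_nf
  have hTsum : (∑ i : Fin n, if α (Fin.castAdd m i) then s (r i) else 0)
      = ∑ i ∈ Finset.univ.filter (fun i : Fin n => α (Fin.castAdd m i) = true), s (r i) := by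
    rw [Finset.sum_filter]
  have hWsum : (∑ i : Fin n, if topAlloc B r i then s (r i) else 0)
      = ∑ i ∈ Finset.univ.filter (fun i : Fin n => topAlloc B r i = true), s (r i) := by
    rw [Finset.sum_filter]
  have hcardT : (Finset.univ.filter (fun i : Fin n => α (Fin.castAdd m i) = true)).card ≤ B := by
    calc (Finset.univ.filter (fun i : Fin n => α (Fin.castAdd m i) = true)).card
        ≤ (Finset.univ.filter fun i : Fin (n+m) => α i = true).card := by
          apply Finset.card_le_card_of_injOn (fun i => Fin.castAdd m i)
          · intro i hi
            simp only [Finset.mem_coe, Finset.mem_filter, Finset.mem_univ, true_and] at hi ⊢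
            exact hi
          · intro a _ b _ h
            exact Fin.castAdd_injective _ _ h
      _ ≤ B := hα
  have key : (∑ i : Fin n, if α (Fin.castAdd m i) then s (r i) else 0)
      ≤ ∑ i : Fin n, (if topAlloc B r i then s (r i) else 0) := by
    rw [hTsum, hWsum]
    apply sum_le_winners (fun i => s (r i)) (fun i => (hs_bounds _ (hr i)).1)
    · rw [card_topAlloc hBn]; exact hcardT
    · intro i hi j hj
      simp only [Finset.mem_filter, Finset.mem_univ, true_and] at hi hj
      exact shade_winner_prop H s hs_mono r hr hi (by simpa using hj)
  linarith

lemma oca_core {n B : ℕ} (hBn : B ≤ n) (H : ℝ) (s : ℝ → ℝ)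
    (hs_mono : MonotoneOn s (Set.Icc (0:ℝ) H))
    (hs_bounds : ∀ v ∈ Set.Icc (0 : ℝ) H, 0 ≤ s v ∧ s v ≤ v)
    (v : Fin n → ℝ) (hv : ∀ i, v i ∈ Set.Icc (0:ℝ) H)
    (S : Finset (Fin n)) (r : Fin n → ℝ) (hr : ∀ i, r i ∈ Set.Icc (0:ℝ) H)
    (hrS : ∀ i ∉ S, r i = v i)
    (m : ℕ) (f : Fin m → ℝ) (hf : ∀ j, f j ∈ Set.Icc (0:ℝ) H)
    (α : Fin (n + m) → Bool)
    (hα : (Finset.univ.filter fun i => α i = true).card ≤ B) :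
    (((∑ i : Fin (n + m), if α i then s (Fin.append r f i) else 0)
            - ∑ j : Fin m, (if α (Fin.natAdd n j) then s (f j) else 0))
          + ∑ i ∈ S, (v i * (if α (Fin.castAdd m i) then 1 else 0)
              - (if α (Fin.castAdd m i) then s (r i) else 0)))
        ≤ (∑ i : Fin n, (if topAlloc B v i then s (v i) else 0))
          + ∑ i ∈ Finset.univ.filter (fun i : Fin n => topAlloc B v i = true),
              (v i - s (v i)) := by
  -- RHS equals sum of v over winners
  have hRHS : (∑ i : Fin n, (if topAlloc B v i then s (v i) else 0))
          + ∑ i ∈ Finset.univ.filter (fun i : Fin n => topAlloc B v i = true),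
              (v i - s (v i))
      = ∑ i ∈ Finset.univ.filter (fun i : Fin n => topAlloc B v i = true), v i := by
    rw [Finset.sum_filter, Finset.sum_filter, ← Finset.sum_add_distrib]
    apply Finset.sum_congr rfl
    intro i _
    by_cases h : topAlloc B v i = true <;> simp [h]
  have hsplit : (∑ i : Fin (n + m), if α i then s (Fin.append r f i) else 0)
      = (∑ i : Fin n, if α (Fin.castAdd m i) then s (r i) else 0)
        + ∑ j : Fin m, (if α (Fin.natAdd n j) then s (f j) else 0) := by
    rw [Fin.sum_univ_add]
    congr 1
    · apply Finset.sum_congr rfl; intro i _; rw [Fin.append_left]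
    · apply Finset.sum_congr rfl; intro j _; rw [Fin.append_right]
  rw [hRHS, hsplit]
  have hLHS : ((∑ i : Fin n, if α (Fin.castAdd m i) then s (r i) else 0)
        + (∑ j : Fin m, (if α (Fin.natAdd n j) then s (f j) else 0))
        - ∑ j : Fin m, (if α (Fin.natAdd n j) then s (f j) else 0))
        + ∑ i ∈ S, (v i * (if α (Fin.castAdd m i) then 1 else 0)
              - (if α (Fin.castAdd m i) then s (r i) else 0))
      = ∑ i : Fin n, ((if α (Fin.castAdd m i) then s (r i) else 0)
          + (if i ∈ S then (v i * (if α (Fin.castAdd m i) then 1 else 0)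
              - (if α (Fin.castAdd m i) then s (r i) else 0)) else 0)) := by
    have hS : (∑ i : Fin n, if i ∈ S then (v i * (if α (Fin.castAdd m i) then 1 else 0)
              - (if α (Fin.castAdd m i) then s (r i) else 0)) else 0)
        = ∑ i ∈ S, (v i * (if α (Fin.castAdd m i) then 1 else 0)
              - (if α (Fin.castAdd m i) then s (r i) else 0)) := by
      rw [Finset.sum_ite_mem, Finset.univ_inter]
    rw [Finset.sum_add_distrib, hS]
    ring
  rw [hLHS]
  have hterm : ∀ i : Fin n, ((if α (Fin.castAdd m i) then s (r i) else 0)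
          + (if i ∈ S then (v i * (if α (Fin.castAdd m i) then 1 else 0)
              - (if α (Fin.castAdd m i) then s (r i) else 0)) else 0))
      ≤ (if α (Fin.castAdd m i) then v i else 0) := by
    intro i
    by_cases hα : α (Fin.castAdd m i) = true
    · by_cases hS : i ∈ S
      · simp [hα, hS]
      · simp only [hα, if_true, hS, if_false, add_zero]
        rw [hrS i hS]
        exact (hs_bounds _ (hv i)).2
    · simp only [Bool.not_eq_true] at hα
      by_cases hS : i ∈ S <;> simp [hα, hS]
  calc _ ≤ ∑ i : Fin n, (if α (Fin.castAdd m i) then v i else 0) :=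
        Finset.sum_le_sum (fun i _ => hterm i)
    _ ≤ ∑ i ∈ Finset.univ.filter (fun i : Fin n => topAlloc B v i = true), v i := by
        rw [Finset.sum_filter]
        have hcardT : (Finset.univ.filter
            (fun i : Fin n => α (Fin.castAdd m i) = true)).card ≤ B := by
          calc (Finset.univ.filter (fun i : Fin n => α (Fin.castAdd m i) = true)).card
              ≤ (Finset.univ.filter fun i : Fin (n+m) => α i = true).card := by
                apply Finset.card_le_card_of_injOn (fun i => Fin.castAdd m i)
                · intro i hi
                  simp only [Finset.mem_coe, Finset.mem_filter, Finset.mem_univ, true_and] at hi ⊢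
                  exact hi
                · intro a _ b _ h
                  exact Fin.castAdd_injective _ _ h
            _ ≤ B := hα
        rw [← Finset.sum_filter, ← Finset.sum_filter]
        apply sum_le_winners v (fun i => (hv i).1)
        · rw [card_topAlloc hBn]; exact hcardT
        · intro i hi j hj
          simp only [Finset.mem_filter, Finset.mem_univ, true_and] at hi hj
          exact topAlloc_le v hi (by simpa using hj)


instance (μ : Measure ℝ) [IsProbabilityMeasure μ] (n : ℕ) :
    IsProbabilityMeasure (iidPi μ n) := by
  unfold iidPi; infer_instance

lemma measurable_rank_comp {n : ℕ} (g : Fin n → ℝ → ℝ) (hg : ∀ j, Measurable (g j))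
    (i : Fin n) : Measurable (fun v : Fin n → ℝ => rank (fun j => g j (v j)) i) := by
  have hr : ∀ v : Fin n → ℝ, rank (fun j => g j (v j)) i
      = ∑ j : Fin n, if (g i (v i) < g j (v j) ∨ (g j (v j) = g i (v i) ∧ j < i))
          then 1 else 0 := by
    intro v
    rw [rank, Finset.card_filter]
  simp_rw [hr]
  apply Finset.measurable_sum
  intro j _
  have hmi : Measurable (fun v : Fin n → ℝ => g i (v i)) :=
    (hg i).comp (measurable_pi_apply i)
  have hmj : Measurable (fun v : Fin n → ℝ => g j (v j)) :=
    (hg j).comp (measurable_pi_apply j)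
  have hset : MeasurableSet {v : Fin n → ℝ |
      g i (v i) < g j (v j) ∨ (g j (v j) = g i (v i) ∧ j < i)} := by
    by_cases hji : j < i
    · have : {v : Fin n → ℝ | g i (v i) < g j (v j) ∨ (g j (v j) = g i (v i) ∧ j < i)}
          = {v | g i (v i) < g j (v j)} ∪ {v | g j (v j) = g i (v i)} := by
        ext v; simp [hji]
      rw [this]
      exact (measurableSet_lt hmi hmj).union (measurableSet_eq_fun hmj hmi)
    · have : {v : Fin n → ℝ | g i (v i) < g j (v j) ∨ (g j (v j) = g i (v i) ∧ j < i)}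
          = {v | g i (v i) < g j (v j)} := by
        ext v; simp [hji]
      rw [this]
      exact measurableSet_lt hmi hmj
  exact Measurable.ite hset measurable_const measurable_const

lemma measurableSet_topAlloc {n B : ℕ} (g : Fin n → ℝ → ℝ) (hg : ∀ j, Measurable (g j))
    (i : Fin n) :
    MeasurableSet {v : Fin n → ℝ | topAlloc B (fun j => g j (v j)) i = true} := by
  have : {v : Fin n → ℝ | topAlloc B (fun j => g j (v j)) i = true}
      = (fun v : Fin n → ℝ => rank (fun j => g j (v j)) i) ⁻¹' {m | m < B} := by
    ext v; simp [topAlloc]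
  rw [this]
  exact measurable_rank_comp g hg i trivial

lemma measurableSet_top_report {n B : ℕ} (i : Fin n) (x : ℝ) :
    MeasurableSet {v : Fin n → ℝ | topAlloc B (Function.update v i x) i = true} := by
  have h := measurableSet_topAlloc (B := B)
    (fun j => if j = i then Function.const ℝ x else id)
    (fun j => by split <;> [exact measurable_const; exact measurable_id]) i
  have he : ∀ v : Fin n → ℝ, (fun j => (if j = i then Function.const ℝ x else id) (v j))
      = Function.update v i x := by
    intro v; funext j
    rw [Function.update_apply]
    by_cases hj : j = i <;> simp [hj]
  have hseteq : {v : Fin n → ℝ | topAlloc B (Function.update v i x) i = true}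
      = {v : Fin n → ℝ |
          topAlloc B (fun j => (if j = i then Function.const ℝ x else id) (v j)) i = true} := by
    ext v; simp only [Set.mem_setOf_eq]; rw [← he v]
  rw [hseteq]; exact h

lemma measurableSet_top_bid {n B : ℕ} (sc : ℝ → ℝ) (hsc : Measurable sc)
    (k : Fin n) (ρ : ℝ) :
    MeasurableSet {v : Fin n → ℝ |
      topAlloc B (Function.update (fun j => sc (v j)) k ρ) k = true} := by
  have h := measurableSet_topAlloc (B := B)
    (fun j => if j = k then Function.const ℝ ρ else sc)
    (fun j => by split <;> [exact measurable_const; exact hsc]) k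
  have he : ∀ v : Fin n → ℝ, (fun j => (if j = k then Function.const ℝ ρ else sc) (v j))
      = Function.update (fun j => sc (v j)) k ρ := by
    intro v; funext j
    rw [Function.update_apply]
    by_cases hj : j = k <;> simp [hj]
  have hseteq : {v : Fin n → ℝ |
        topAlloc B (Function.update (fun j => sc (v j)) k ρ) k = true}
      = {v : Fin n → ℝ |
          topAlloc B (fun j => (if j = k then Function.const ℝ ρ else sc) (v j)) k = true} := by
    ext v; simp only [Set.mem_setOf_eq]; rw [← he v]
  rw [hseteq]; exact h

lemma rank_le_rank_of_imp {n : ℕ} (b b' : Fin n → ℝ) (i : Fin n)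
    (h : ∀ j, j ≠ i → beats b' j i → beats b j i) : rank b' i ≤ rank b i := by
  rw [rank_eq, rank_eq]
  apply Finset.card_le_card
  intro j hj
  rw [Finset.mem_filter] at hj ⊢
  refine ⟨Finset.mem_univ _, ?_⟩
  rcases eq_or_ne j i with rfl | hne
  · exact absurd hj.2 (not_beats_self b' j)
  · exact h j hne hj.2

lemma topAlloc_update_mono {n B : ℕ} (b : Fin n → ℝ) (k : Fin n) {ρ ρ' : ℝ}
    (h : ρ ≤ ρ') (hw : topAlloc B (Function.update b k ρ) k = true) :
    topAlloc B (Function.update b k ρ') k = true := by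
  simp only [topAlloc, decide_eq_true_eq] at hw ⊢
  refine lt_of_le_of_lt ?_ hw
  apply rank_le_rank_of_imp
  intro j hj hb
  have hbj : Function.update b k ρ' j = b j := Function.update_of_ne hj _ _
  have hbj2 : Function.update b k ρ j = b j := Function.update_of_ne hj _ _
  rcases hb with hb | ⟨hb, hb'⟩
  · rw [Function.update_self] at hb
    rw [hbj] at hb
    left
    rw [Function.update_self, hbj2]
    exact lt_of_le_of_lt h hb
  · rw [Function.update_self] at hb
    rw [hbj] at hb
    rcases eq_or_lt_of_le h with rfl | hlt
    · exact Or.inr ⟨by rw [hbj2, hb, Function.update_self], hb'⟩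
    · left
      rw [Function.update_self, hbj2, hb]
      exact hlt

lemma pi_coord_null {n : ℕ} (μ : Measure ℝ) [IsProbabilityMeasure μ]
    (E : Set ℝ) (h0 : μ E = 0) (j : Fin n) : iidPi μ n {v | v j ∈ E} = 0 := by
  have hset : {v : Fin n → ℝ | v j ∈ E}
      = Set.pi Set.univ (Function.update (fun _ : Fin n => (Set.univ : Set ℝ)) j E) := by
    ext v
    simp only [Set.mem_setOf_eq, Set.mem_pi, Set.mem_univ, true_implies]
    constructor
    · intro hv k
      rcases eq_or_ne k j with rfl | hk
      · rwa [Function.update_self]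
      · rw [Function.update_of_ne hk]; trivial
    · intro hv
      have := hv j
      rwa [Function.update_self] at this
  rw [hset, iidPi, Measure.pi_pi]
  apply Finset.prod_eq_zero (Finset.mem_univ j)
  rw [Function.update_self]
  exact h0

def repSet (B : ℕ) {n : ℕ} (i : Fin n) (x : ℝ) : Set (Fin n → ℝ) :=
  {v | topAlloc B (Function.update v i x) i = true}

def bidSet (B : ℕ) {n : ℕ} (sc : ℝ → ℝ) (k : Fin n) (ρ : ℝ) : Set (Fin n → ℝ) :=
  {v | topAlloc B (Function.update (fun j => sc (v j)) k ρ) k = true}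

lemma measurableSet_repSet {n B : ℕ} (i : Fin n) (x : ℝ) :
    MeasurableSet (repSet B i x) := measurableSet_top_report i x

lemma measurableSet_bidSet {n B : ℕ} (sc : ℝ → ℝ) (hsc : Measurable sc)
    (k : Fin n) (ρ : ℝ) : MeasurableSet (bidSet B sc k ρ) :=
  measurableSet_top_bid sc hsc k ρ

lemma integrable_ind {α : Type*} [MeasurableSpace α] (ν : Measure α) [IsFiniteMeasure ν]
    {S : Set α} (hS : MeasurableSet S) :
    Integrable (S.indicator (fun _ => (1:ℝ))) ν :=
  (integrable_const (1:ℝ)).indicator hS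

lemma integral_ind_nonneg {α : Type*} [MeasurableSpace α] (ν : Measure α) (S : Set α) :
    0 ≤ ∫ v, S.indicator (fun _ => (1:ℝ)) v ∂ν :=
  integral_nonneg fun v => Set.indicator_nonneg (fun _ _ => zero_le_one) v

lemma integral_ind_le_one {α : Type*} [MeasurableSpace α] (ν : Measure α)
    [IsProbabilityMeasure ν] {S : Set α} (hS : MeasurableSet S) :
    ∫ v, S.indicator (fun _ => (1:ℝ)) v ∂ν ≤ 1 := by
  rw [integral_indicator_const (1:ℝ) hS, smul_eq_mul, mul_one]
  have h1 : ν S ≤ 1 := prob_le_one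
  calc (ν S).toReal ≤ ENNReal.toReal 1 :=
        ENNReal.toReal_mono (by simp) h1
    _ = 1 := by simp

lemma ind_le_ind {α : Type*} {S T : Set α} (v : α) (h : v ∈ S → v ∈ T) :
    S.indicator (fun _ => (1:ℝ)) v ≤ T.indicator (fun _ => (1:ℝ)) v := by
  by_cases hv : v ∈ S
  · rw [Set.indicator_of_mem hv, Set.indicator_of_mem (h hv)]
  · rw [Set.indicator_of_notMem hv]
    exact Set.indicator_nonneg (fun _ _ => zero_le_one) v

lemma shade_integral_eq {n B : ℕ} (μ : Measure ℝ) [IsProbabilityMeasure μ]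
    (s : ℝ → ℝ) (i : Fin n) (x t : ℝ) :
    ∫ v, shadeUtil s B (Function.update v i x) i t ∂(iidPi μ n)
      = (t - s x) * ∫ v, (repSet B i x).indicator (fun _ => (1:ℝ)) v ∂(iidPi μ n) := by
  rw [← integral_const_mul]
  apply integral_congr_ae
  apply Filter.Eventually.of_forall
  intro v
  by_cases hv : v ∈ repSet B i x
  · have htop : topAlloc B (Function.update v i x) i = true := hv
    simp [shadeUtil, htop, Set.indicator_of_mem hv, Function.update_self]
  · have htop : topAlloc B (Function.update v i x) i = false := by
      rw [← Bool.not_eq_true]; exact hv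
    simp [shadeUtil, htop, Set.indicator_of_notMem hv]

lemma ae_coord_Icc {n : ℕ} (μ : Measure ℝ) [IsProbabilityMeasure μ] {H : ℝ}
    (hsupp : μ (Set.Icc (0 : ℝ) H) = 1) (j : Fin n) :
    ∀ᵐ v ∂(iidPi μ n), v j ∈ Set.Icc (0:ℝ) H := by
  have h0 : μ (Set.Icc (0:ℝ) H)ᶜ = 0 := by
    rw [measure_compl measurableSet_Icc (measure_ne_top μ _), hsupp, measure_univ]
    simp
  have := pi_coord_null μ (Set.Icc (0:ℝ) H)ᶜ h0 j
  rw [ae_iff]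
  simpa using this

lemma ae_coord_not_mem {n : ℕ} (μ : Measure ℝ) [IsProbabilityMeasure μ]
    {E : Set ℝ} (h0 : μ E = 0) (j : Fin n) :
    ∀ᵐ v ∂(iidPi μ n), v j ∉ E := by
  have := pi_coord_null μ E h0 j
  rw [ae_iff]
  simpa using this

lemma pabga_integral_eq {n B : ℕ} {H : ℝ} (μ : Measure ℝ) [IsProbabilityMeasure μ]
    (hsupp : μ (Set.Icc (0 : ℝ) H) = 1)
    (s sc : ℝ → ℝ) (hsceq : ∀ y ∈ Set.Icc (0:ℝ) H, sc y = s y)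
    (k : Fin n) (ρ x : ℝ) :
    ∫ v, pabgaUtil B (Function.update (fun j => s (v j)) k ρ) k x ∂(iidPi μ n)
      = (x - ρ) * ∫ v, (bidSet B sc k ρ).indicator (fun _ => (1:ℝ)) v ∂(iidPi μ n) := by
  rw [← integral_const_mul]
  apply integral_congr_ae
  have hae : ∀ᵐ v ∂(iidPi μ n), ∀ j, v j ∈ Set.Icc (0:ℝ) H :=
    ae_all_iff.mpr fun j => ae_coord_Icc μ hsupp j
  filter_upwards [hae] with v hv
  have hupd : Function.update (fun j => s (v j)) k ρ
      = Function.update (fun j => sc (v j)) k ρ := by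
    funext j
    rw [Function.update_apply, Function.update_apply]
    by_cases hj : j = k
    · simp [hj]
    · simp only [hj, if_false]
      exact (hsceq (v j) (hv j)).symm
  rw [pabgaUtil, hupd]
  by_cases hvb : v ∈ bidSet B sc k ρ
  · have htop : topAlloc B (Function.update (fun j => sc (v j)) k ρ) k = true := hvb
    simp [htop, Set.indicator_of_mem hvb, Function.update_self]
  · have htop : topAlloc B (Function.update (fun j => sc (v j)) k ρ) k = false := by
      rw [← Bool.not_eq_true]; exact hvb
    simp [htop, Set.indicator_of_notMem hvb]

lemma pool_null {n B : ℕ} (hB : 0 < B) (hBn : B < n) {H : ℝ} (hH : 0 ≤ H)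
    (μ : Measure ℝ) [IsProbabilityMeasure μ]
    (hsupp : μ (Set.Icc (0 : ℝ) H) = 1)
    (s sc : ℝ → ℝ) (hsc_mono : Monotone sc) (hsc_meas : Measurable sc)
    (hsceq : ∀ y ∈ Set.Icc (0:ℝ) H, sc y = s y)
    (hs_bounds : ∀ y ∈ Set.Icc (0 : ℝ) H, 0 ≤ s y ∧ s y ≤ y)
    (hBNE : ∀ (i : Fin n) (t : ℝ), t ∈ Set.Icc (0 : ℝ) H → ∀ r : ℝ, 0 ≤ r →
      (∫ v, pabgaUtil B (Function.update (fun j => s (v j)) i r) i t ∂(iidPi μ n))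
        ≤ ∫ v, pabgaUtil B (Function.update (fun j => s (v j)) i (s t)) i t ∂(iidPi μ n))
    (t : ℝ) (ht : t ∈ Set.Icc (0:ℝ) H) :
    μ {y | t < y ∧ y ≤ H ∧ sc y = s t} = 0 := by
  by_contra hA0
  set c := s t with hc
  set A := {y | t < y ∧ y ≤ H ∧ sc y = c} with hA
  obtain ⟨x, hx⟩ := nonempty_of_measure_ne_zero hA0
  have hxA : t < x ∧ x ≤ H ∧ sc x = c := hx
  have hxIcc : x ∈ Set.Icc (0:ℝ) H := ⟨le_trans ht.1 hxA.1.le, hxA.2.1⟩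
  have hc0 : 0 ≤ c := (hs_bounds t ht).1
  have hct : c ≤ t := (hs_bounds t ht).2
  have hsx : s x = c := by rw [← hsceq x hxIcc]; exact hxA.2.2
  have hxc : c < x := lt_of_le_of_lt hct hxA.1
  have hn2 : 2 ≤ n := by omega
  set k : Fin n := ⟨n - 1, by omega⟩ with hk
  have hkv : (k : ℕ) = n - 1 := rfl
  have hklt : ∀ j : Fin n, j ≠ k → j < k := by
    intro j hj
    have hjv : (j : ℕ) ≠ (k : ℕ) := fun h => hj (Fin.val_injective h)
    have h1 := j.isLt
    rw [Fin.lt_def]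
    omega
  set SD := {v : Fin n → ℝ | ∀ j, j ≠ k → v j ∈ A} with hSD
  have hA_meas : MeasurableSet A := by
    have : A = (Set.Ioi t ∩ Set.Iic H) ∩ sc ⁻¹' {c} := by
      ext y
      simp [hA, Set.mem_Ioi, Set.mem_Iic, and_assoc]
    rw [this]
    exact (measurableSet_Ioi.inter measurableSet_Iic).inter
      (hsc_meas (measurableSet_singleton c))
  have hSD_eq : SD = Set.pi Set.univ (fun j => if j = k then Set.univ else A) := by
    ext v
    simp only [hSD, Set.mem_setOf_eq, Set.mem_pi, Set.mem_univ, true_implies]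
    constructor
    · intro h j
      by_cases hj : j = k
      · simp [hj]
      · simpa [hj] using h j hj
    · intro h j hj
      have := h j
      simpa [hj] using this
  have hSD_meas : MeasurableSet SD := by
    rw [hSD_eq]
    apply MeasurableSet.univ_pi
    intro j
    by_cases hj : j = k <;> simp [hj, hA_meas]
  set P := iidPi μ n with hP
  have hPSD : P SD = ∏ j : Fin n, μ (if j = k then Set.univ else A) := by
    rw [hSD_eq, hP]
    exact Measure.pi_pi _ _
  have hSDpos : 0 < (P SD).toReal := by
    apply ENNReal.toReal_pos
    · rw [hPSD]
      rw [Finset.prod_ne_zero_iff]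
      intro j _
      by_cases hj : j = k <;> simp [hj, hA0]
    · exact measure_ne_top _ _
  set D := (P SD).toReal with hD
  -- the three win/lose computations on SD
  have hSD_bids : ∀ v ∈ SD, ∀ ρ : ℝ,
      Function.update (fun j => sc (v j)) k ρ = fun j => if j = k then ρ else c := by
    intro v hv ρ
    funext j
    rw [Function.update_apply]
    by_cases hj : j = k
    · simp [hj]
    · simp only [hj, if_false]
      exact (hv j hj).2.2
  have hSD_lose : ∀ v ∈ SD, v ∉ bidSet B sc k c := by
    intro v hv hvb
    have htop : topAlloc B (Function.update (fun j => sc (v j)) k c) k = true := hvb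
    rw [hSD_bids v hv c] at htop
    simp only [topAlloc, decide_eq_true_eq] at htop
    have hrk : rank (fun j : Fin n => if j = k then c else c) k = n - 1 := by
      have hfun : (fun j : Fin n => if j = k then c else c) = fun _ => c := by
        funext j; split <;> rfl
      rw [hfun, rank]
      have hfilter : (Finset.univ.filter fun j : Fin n =>
          (c:ℝ) < c ∨ ((c:ℝ) = c ∧ j < k)) = Finset.univ.erase k := by
        ext j
        rw [Finset.mem_filter, Finset.mem_erase]
        constructor
        · rintro ⟨-, h⟩
          refine ⟨?_, Finset.mem_univ _⟩
          rcases h with h | h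
          · exact absurd h (lt_irrefl c)
          · exact ne_of_lt h.2
        · rintro ⟨hj, -⟩
          exact ⟨Finset.mem_univ _, Or.inr ⟨rfl, hklt j hj⟩⟩
      rw [hfilter, Finset.card_erase_of_mem (Finset.mem_univ k), Finset.card_univ,
        Fintype.card_fin]
    rw [hrk] at htop
    omega
  have hSD_win : ∀ v ∈ SD, ∀ ε : ℝ, 0 < ε → v ∈ bidSet B sc k (c + ε) := by
    intro v hv ε hε
    show topAlloc B (Function.update (fun j => sc (v j)) k (c + ε)) k = true
    rw [hSD_bids v hv (c + ε)]
    simp only [topAlloc, decide_eq_true_eq]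
    have hrk : rank (fun j : Fin n => if j = k then c + ε else c) k = 0 := by
      rw [rank, Finset.card_eq_zero, Finset.filter_eq_empty_iff]
      intro j _
      show ¬((if k = k then c + ε else c) < (if j = k then c + ε else c)
        ∨ ((if j = k then c + ε else c) = (if k = k then c + ε else c) ∧ j < k))
      rw [if_pos (rfl : k = k)]
      by_cases hj : j = k
      · subst hj
        rw [if_pos (rfl : k = k)]
        simp [lt_irrefl]
      · rw [if_neg hj]
        push_neg
        refine ⟨by linarith, ?_⟩
        intro h
        exfalso
        linarith
    rw [hrk]
    omega
  -- integral facts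
  have hWc_int : Integrable ((bidSet B sc k c).indicator (fun _ => (1:ℝ))) P :=
    integrable_ind P (measurableSet_bidSet sc hsc_meas k c)
  have hSD_int : Integrable (SD.indicator (fun _ => (1:ℝ))) P :=
    integrable_ind P hSD_meas
  have hDval : ∫ v, SD.indicator (fun _ => (1:ℝ)) v ∂P = D := by
    rw [integral_indicator_const (1:ℝ) hSD_meas, smul_eq_mul, mul_one]; rfl
  set Wc := ∫ v, (bidSet B sc k c).indicator (fun _ => (1:ℝ)) v ∂P with hWc
  have hWc_nonneg : 0 ≤ Wc := integral_ind_nonneg P _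
  have hkey : ∀ ε : ℝ, 0 < ε →
      Wc + D ≤ ∫ v, (bidSet B sc k (c + ε)).indicator (fun _ => (1:ℝ)) v ∂P := by
    intro ε hε
    have hpt : ∀ v, (bidSet B sc k c).indicator (fun _ => (1:ℝ)) v
        + SD.indicator (fun _ => (1:ℝ)) v
        ≤ (bidSet B sc k (c + ε)).indicator (fun _ => (1:ℝ)) v := by
      intro v
      by_cases hvD : v ∈ SD
      · rw [Set.indicator_of_notMem (hSD_lose v hvD), Set.indicator_of_mem hvD,
          Set.indicator_of_mem (hSD_win v hvD ε hε)]
        norm_num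
      · rw [Set.indicator_of_notMem hvD, add_zero]
        apply ind_le_ind
        intro hv
        exact topAlloc_update_mono _ k (by linarith) hv
    calc Wc + D = ∫ v, ((bidSet B sc k c).indicator (fun _ => (1:ℝ)) v
          + SD.indicator (fun _ => (1:ℝ)) v) ∂P := by
          rw [integral_add hWc_int hSD_int, hDval]
      _ ≤ _ := by
          apply integral_mono (hWc_int.add hSD_int)
            (integrable_ind P (measurableSet_bidSet sc hsc_meas k (c + ε))) hpt
  -- BNE chain
  have hchain : ∀ ε : ℝ, 0 < ε →
      (x - (c + ε)) * ∫ v, (bidSet B sc k (c + ε)).indicator (fun _ => (1:ℝ)) v ∂P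
        ≤ (x - c) * Wc := by
    intro ε hε
    have h := hBNE k x hxIcc (c + ε) (by linarith)
    rw [pabga_integral_eq μ hsupp s sc hsceq k (c + ε) x,
      pabga_integral_eq μ hsupp s sc hsceq k (s x) x, hsx] at h
    exact h
  -- pick a concrete ε and derive a contradiction
  set ε := min ((x - c) / 2) ((x - c) * D / 4) with hεdef
  have hεpos : 0 < ε := by
    apply lt_min
    · linarith
    · have hp : 0 < (x - c) * D := mul_pos (by linarith) hSDpos
      linarith
  have hWε_le_one : (∫ v, (bidSet B sc k (c + ε)).indicator (fun _ => (1:ℝ)) v ∂P) ≤ 1 :=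
    integral_ind_le_one P (measurableSet_bidSet sc hsc_meas k (c + ε))
  have h1 := hkey ε hεpos
  have h2 := hchain ε hεpos
  have hε1 : ε ≤ (x - c) / 2 := min_le_left _ _
  have hε2 : ε ≤ (x - c) * D / 4 := min_le_right _ _
  have hxcε : 0 ≤ x - (c + ε) := by linarith
  have h3 : (x - (c + ε)) * (Wc + D)
      ≤ (x - (c + ε)) * ∫ v, (bidSet B sc k (c + ε)).indicator (fun _ => (1:ℝ)) v ∂P :=
    mul_le_mul_of_nonneg_left h1 hxcε
  have hWD1 : Wc + D ≤ 1 := le_trans h1 hWε_le_one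
  -- (x-c)*D ≤ ε*(Wc+D) ≤ ε ≤ (x-c)*D/4, contradiction with (x-c)*D > 0
  have hpos : 0 < (x - c) * D := mul_pos (by linarith) hSDpos
  nlinarith [h3, h2, hWD1, hε2, hεpos, hpos, hWc_nonneg, hSDpos]

lemma bic_core {n B : ℕ} (hBn : B ≤ n) {H : ℝ} (hH : 0 ≤ H)
    (μ : Measure ℝ) [IsProbabilityMeasure μ]
    (hcont : ∀ x : ℝ, μ {x} = 0) (hsupp : μ (Set.Icc (0 : ℝ) H) = 1)
    (s : ℝ → ℝ) (hs_mono : MonotoneOn s (Set.Icc (0 : ℝ) H))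
    (hs_bounds : ∀ y ∈ Set.Icc (0 : ℝ) H, 0 ≤ s y ∧ s y ≤ y)
    (hBNE : ∀ (i : Fin n) (t : ℝ), t ∈ Set.Icc (0 : ℝ) H → ∀ r : ℝ, 0 ≤ r →
      (∫ v, pabgaUtil B (Function.update (fun j => s (v j)) i r) i t ∂(iidPi μ n))
        ≤ ∫ v, pabgaUtil B (Function.update (fun j => s (v j)) i (s t)) i t ∂(iidPi μ n))
    (i : Fin n) (t : ℝ) (ht : t ∈ Set.Icc (0:ℝ) H) (r : ℝ) (hr : r ∈ Set.Icc (0:ℝ) H) :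
    ∫ v, shadeUtil s B (Function.update v i r) i t ∂(iidPi μ n)
      ≤ ∫ v, shadeUtil s B (Function.update v i t) i t ∂(iidPi μ n) := by
  have hst : 0 ≤ t - s t := by have := (hs_bounds t ht).2; linarith
  rcases Nat.eq_zero_or_pos B with hB0 | hBpos
  · -- B = 0 : nobody is ever allocated
    subst hB0
    have hsh : ∀ (v : Fin n → ℝ) (x : ℝ), shadeUtil s 0 (Function.update v i x) i t = 0 := by
      intro v x; simp [shadeUtil, topAlloc]
    simp only [hsh, integral_zero]
    exact le_refl 0
  rcases eq_or_lt_of_le hBn with hBeq | hBlt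
  · -- B = n : everyone is always allocated
    have htop : ∀ (b : Fin n → ℝ), topAlloc B b i = true := by
      intro b
      simp only [topAlloc, decide_eq_true_eq]
      rw [hBeq]
      exact rank_lt_n b i
    have hshade : ∀ x : ℝ,
        (∫ v, shadeUtil s B (Function.update v i x) i t ∂(iidPi μ n)) = t - s x := by
      intro x
      have hpt : ∀ v : Fin n → ℝ, shadeUtil s B (Function.update v i x) i t = t - s x := by
        intro v; simp [shadeUtil, htop, Function.update_self]
      calc (∫ v, shadeUtil s B (Function.update v i x) i t ∂(iidPi μ n))
          = ∫ _, (t - s x) ∂(iidPi μ n) :=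
            integral_congr_ae (Filter.Eventually.of_forall hpt)
        _ = t - s x := by simp [measure_univ]
    have hpabga : ∀ ρ : ℝ,
        (∫ v, pabgaUtil B (Function.update (fun j => s (v j)) i ρ) i t ∂(iidPi μ n))
          = t - ρ := by
      intro ρ
      have hpt : ∀ v : Fin n → ℝ,
          pabgaUtil B (Function.update (fun j => s (v j)) i ρ) i t = t - ρ := by
        intro v; simp [pabgaUtil, htop, Function.update_self]
      calc (∫ v, pabgaUtil B (Function.update (fun j => s (v j)) i ρ) i t ∂(iidPi μ n))
          = ∫ _, (t - ρ) ∂(iidPi μ n) :=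
            integral_congr_ae (Filter.Eventually.of_forall hpt)
        _ = t - ρ := by simp [measure_univ]
    have h := hBNE i t ht (s r) (hs_bounds r hr).1
    rw [hpabga (s r), hpabga (s t)] at h
    rw [hshade r, hshade t]
    exact h
  -- main case : 0 < B < n
  set sc : ℝ → ℝ := fun y => s (max 0 (min y H)) with hscdef
  have hclamp_mem : ∀ y : ℝ, max 0 (min y H) ∈ Set.Icc (0:ℝ) H :=
    fun y => ⟨le_max_left _ _, max_le hH (min_le_right y H)⟩
  have hsc_mono : Monotone sc := by
    intro a b hab
    exact hs_mono (hclamp_mem a) (hclamp_mem b)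
      (max_le_max le_rfl (min_le_min hab le_rfl))
  have hsc_meas : Measurable sc := hsc_mono.measurable
  have hsceq : ∀ y ∈ Set.Icc (0:ℝ) H, sc y = s y := by
    intro y hy
    simp only [hscdef]
    rw [min_eq_left hy.2, max_eq_right hy.1]
  have hA0 : μ {y | t < y ∧ y ≤ H ∧ sc y = s t} = 0 :=
    pool_null hBpos hBlt hH μ hsupp s sc hsc_mono hsc_meas hsceq hs_bounds hBNE t ht
  have haegood : ∀ᵐ v ∂(iidPi μ n), ∀ j : Fin n,
      v j ∈ Set.Icc (0:ℝ) H ∧ v j ∉ {y : ℝ | t < y ∧ y ≤ H ∧ sc y = s t} ∧ v j ≠ t := by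
    rw [ae_all_iff]
    intro j
    have h1 := ae_coord_Icc (n := n) μ hsupp j
    have h2 := ae_coord_not_mem (n := n) μ hA0 j
    have h3 := ae_coord_not_mem (n := n) μ (hcont t) j
    filter_upwards [h1, h2, h3] with v hv1 hv2 hv3
    exact ⟨hv1, hv2, by simpa using hv3⟩
  rw [shade_integral_eq μ s i r t, shade_integral_eq μ s i t t]
  set Gr := ∫ v, (repSet B i r).indicator (fun _ => (1:ℝ)) v ∂(iidPi μ n) with hGrdef
  set Gt := ∫ v, (repSet B i t).indicator (fun _ => (1:ℝ)) v ∂(iidPi μ n) with hGtdef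
  set Wst := ∫ v, (bidSet B sc i (s t)).indicator (fun _ => (1:ℝ)) v ∂(iidPi μ n) with hWdef
  have hGr0 : 0 ≤ Gr := integral_ind_nonneg _ _
  have hGr1 : Gr ≤ 1 := integral_ind_le_one _ (measurableSet_repSet i r)
  have hGt0 : 0 ≤ Gt := integral_ind_nonneg _ _
  -- Step 1 : report-win with r implies bid-win with s r + ε
  have hstep1 : ∀ ε : ℝ, 0 < ε →
      Gr ≤ ∫ v, (bidSet B sc i (s r + ε)).indicator (fun _ => (1:ℝ)) v ∂(iidPi μ n) := by
    intro ε hε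
    apply integral_mono (integrable_ind _ (measurableSet_repSet i r))
      (integrable_ind _ (measurableSet_bidSet sc hsc_meas i (s r + ε)))
    intro v
    apply ind_le_ind
    intro hv
    have hvr : topAlloc B (Function.update v i r) i = true := hv
    show topAlloc B (Function.update (fun j => sc (v j)) i (s r + ε)) i = true
    simp only [topAlloc, decide_eq_true_eq] at hvr ⊢
    refine lt_of_le_of_lt ?_ hvr
    apply rank_le_rank_of_imp
    intro j hj hb
    have hscr : sc r = s r := hsceq r hr
    have hgt : s r < sc (v j) := by
      rcases hb with hb | hb
      · rw [Function.update_self, Function.update_of_ne hj] at hb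
        linarith
      · rw [Function.update_self, Function.update_of_ne hj] at hb
        rw [hb.1] at *
        linarith [hb.1]
    have hvj : r < v j := by
      by_contra hle
      push_neg at hle
      have := hsc_mono hle
      rw [hscr] at this
      linarith
    left
    rw [Function.update_self, Function.update_of_ne hj]
    exact hvj
  -- Step 3 : bid-win with s t implies report-win with t (a.e.)
  have hstep3 : Wst ≤ Gt := by
    apply integral_mono_ae (integrable_ind _ (measurableSet_bidSet sc hsc_meas i (s t)))
      (integrable_ind _ (measurableSet_repSet i t))
    filter_upwards [haegood] with v hv
    apply ind_le_ind
    intro hvb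
    have hvb' : topAlloc B (Function.update (fun j => sc (v j)) i (s t)) i = true := hvb
    show topAlloc B (Function.update v i t) i = true
    simp only [topAlloc, decide_eq_true_eq] at hvb' ⊢
    refine lt_of_le_of_lt ?_ hvb'
    apply rank_le_rank_of_imp
    intro j hj hb
    have hvjt : t < v j := by
      rcases hb with hb | hb
      · rw [Function.update_self, Function.update_of_ne hj] at hb
        exact hb
      · rw [Function.update_self, Function.update_of_ne hj] at hb
        exact absurd hb.1 (hv j).2.2
    have hsct : sc t = s t := hsceq t ht
    have hge : s t ≤ sc (v j) := by
      rw [← hsct]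
      exact hsc_mono hvjt.le
    rcases eq_or_lt_of_le hge with heq | hlt
    · exfalso
      exact (hv j).2.1 ⟨hvjt, (hv j).1.2, heq.symm⟩
    · left
      rw [Function.update_self, Function.update_of_ne hj]
      exact hlt
  -- Step 2 : BNE inequality with bid s r + ε
  have hstep2 : ∀ ε : ℝ, 0 < ε → ε < t - s r →
      (t - s r) * Gr ≤ (t - s t) * Wst + ε := by
    intro ε hε hεlt
    have h := hBNE i t ht (s r + ε) (by have := (hs_bounds r hr).1; linarith)
    rw [pabga_integral_eq μ hsupp s sc hsceq i (s r + ε) t,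
      pabga_integral_eq μ hsupp s sc hsceq i (s t) t] at h
    have h1 := hstep1 ε hε
    have hWε1 : (∫ v, (bidSet B sc i (s r + ε)).indicator (fun _ => (1:ℝ)) v ∂(iidPi μ n))
        ≤ 1 := integral_ind_le_one _ (measurableSet_bidSet sc hsc_meas i (s r + ε))
    have h2 : (t - s r - ε) * Gr
        ≤ (t - s r - ε) * ∫ v, (bidSet B sc i (s r + ε)).indicator (fun _ => (1:ℝ)) v
            ∂(iidPi μ n) :=
      mul_le_mul_of_nonneg_left h1 (by linarith)
    have h3 : ε * Gr ≤ ε * 1 := mul_le_mul_of_nonneg_left hGr1 (le_of_lt hε)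
    nlinarith [h, h2, h3]
  -- conclusion
  by_cases hcase : t - s r ≤ 0
  · have hle : (t - s r) * Gr ≤ 0 := mul_nonpos_iff.mpr (Or.inr ⟨hcase, hGr0⟩)
    have hge : 0 ≤ (t - s t) * Gt := mul_nonneg hst hGt0
    linarith
  · push_neg at hcase
    have hfin : (t - s r) * Gr ≤ (t - s t) * Wst := by
      by_contra hlt
      push_neg at hlt
      set ε := min ((t - s r)/2) (((t - s r) * Gr - (t - s t) * Wst)/2) with hεdef
      have hεpos : 0 < ε := lt_min (by linarith) (by linarith)
      have hεlt : ε < t - s r := lt_of_le_of_lt (min_le_left _ _) (by linarith)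
      have h2 : ε ≤ ((t - s r) * Gr - (t - s t) * Wst)/2 := min_le_right _ _
      have := hstep2 ε hεpos hεlt
      linarith
    have hmono : (t - s t) * Wst ≤ (t - s t) * Gt := mul_le_mul_of_nonneg_left hstep3 hst
    linarith

/-- Suppose the `n` bidders' values are i.i.d. from a continuous
distribution `μ` supported on `[0, H]`, and `s` is a non-decreasing function with
`0 ≤ s v ≤ v` that is a symmetric Bayes–Nash equilibrium bidding strategy of the
pay-as-bid greedy auction with block size `B`.  Then the shading auction (allocate the
`B` highest reports, charge each allocated bidder `i` the payment `s (vᵢ)`, burn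
nothing) is BIC, MMIC, OCA-proof and efficient. -/
theorem shading_auction_good (n B : ℕ) (hBn : B ≤ n) (H : ℝ) (hH : 0 ≤ H)
    (μ : Measure ℝ) [IsProbabilityMeasure μ]
    (hcont : ∀ x : ℝ, μ {x} = 0) (hsupp : μ (Set.Icc (0 : ℝ) H) = 1)
    (s : ℝ → ℝ) (hs_mono : MonotoneOn s (Set.Icc (0 : ℝ) H))
    (hs_bounds : ∀ v ∈ Set.Icc (0 : ℝ) H, 0 ≤ s v ∧ s v ≤ v)
    (hBNE : ∀ (i : Fin n) (t : ℝ), t ∈ Set.Icc (0 : ℝ) H → ∀ r : ℝ, 0 ≤ r →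
      (∫ v, pabgaUtil B (Function.update (fun j => s (v j)) i r) i t ∂(iidPi μ n))
        ≤ ∫ v, pabgaUtil B (Function.update (fun j => s (v j)) i (s t)) i t ∂(iidPi μ n)) :
    -- (1) BIC: truthful reporting is a Bayes–Nash equilibrium of the shading auction.
    (∀ (i : Fin n) (t : ℝ), t ∈ Set.Icc (0 : ℝ) H → ∀ r ∈ Set.Icc (0 : ℝ) H,
      (∫ v, shadeUtil s B (Function.update v i r) i t ∂(iidPi μ n))
        ≤ ∫ v, shadeUtil s B (Function.update v i t) i t ∂(iidPi μ n))
    ∧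
    -- (2) MMIC: for any reports `r`, fake bids `f` and feasible allocation `α`, the
    -- miner's utility (payments collected minus the payments of its own fake bids) is
    -- at most its utility under the intended allocation with no fake bids.
    (∀ (r : Fin n → ℝ), (∀ i, r i ∈ Set.Icc (0 : ℝ) H) →
      ∀ (m : ℕ) (f : Fin m → ℝ), (∀ j, f j ∈ Set.Icc (0 : ℝ) H) →
      ∀ α : Fin (n + m) → Bool,
        (Finset.univ.filter fun i => α i = true).card ≤ B →
        ((∑ i : Fin (n + m), if α i then s (Fin.append r f i) else 0)
          - ∑ j : Fin m, (if α (Fin.natAdd n j) then s (f j) else 0))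
        ≤ ∑ i : Fin n, (if topAlloc B r i then s (r i) else 0))
    ∧
    -- (3) OCA-proofness: no deviating coalition `S` with reports `r` (others truthful),
    -- fake bids `f` and feasible allocation `α` obtains, together with the miner, a
    -- joint utility exceeding that of the miner and the winners under truthful play.
    (∀ (v : Fin n → ℝ), (∀ i, v i ∈ Set.Icc (0 : ℝ) H) →
      ∀ (S : Finset (Fin n)) (r : Fin n → ℝ), (∀ i, r i ∈ Set.Icc (0 : ℝ) H) →
        (∀ i ∉ S, r i = v i) →
      ∀ (m : ℕ) (f : Fin m → ℝ), (∀ j, f j ∈ Set.Icc (0 : ℝ) H) →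
      ∀ α : Fin (n + m) → Bool,
        (Finset.univ.filter fun i => α i = true).card ≤ B →
        (((∑ i : Fin (n + m), if α i then s (Fin.append r f i) else 0)
            - ∑ j : Fin m, (if α (Fin.natAdd n j) then s (f j) else 0))
          + ∑ i ∈ S, (v i * (if α (Fin.castAdd m i) then 1 else 0)
              - (if α (Fin.castAdd m i) then s (r i) else 0)))
        ≤ (∑ i : Fin n, (if topAlloc B v i then s (v i) else 0))
          + ∑ i ∈ Finset.univ.filter (fun i : Fin n => topAlloc B v i = true),
              (v i - s (v i)))
    ∧
    -- (4) Efficiency: the shading auction always allocates a set of `B` bidders with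
    -- the highest values.
    (∀ v : Fin n → ℝ,
      (Finset.univ.filter fun i : Fin n => topAlloc B v i = true).card = B ∧
      ∀ i j : Fin n, topAlloc B v i = true → topAlloc B v j = false → v j ≤ v i) := by
  refine ⟨?_, ?_, ?_, ?_⟩
  · intro i t ht r hr
    exact bic_core hBn hH μ hcont hsupp s hs_mono hs_bounds hBNE i t ht r hr
  · intro r hr m f hf α hα
    exact mmic_core hBn H s hs_mono hs_bounds r hr m f hf α hα
  · intro v hv S r hr hrS m f hf α hα
    exact oca_core hBn H s hs_mono hs_bounds v hv S r hr hrS m f hf α hα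
  · intro v
    exact ⟨card_topAlloc hBn v, fun i j hi hj => topAlloc_le v hi hj⟩
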